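/- If a preorder ≽ on Δ satisfies Pareto, Converse Pareto, Sets of Utilities, and Unidimensional Expectations, then it satisfies Expectationalism: f ∼ δ_{exp(f)} for every f ∈ Δ. -/

import Mathlib

open scoped BigOperators

noncomputable section

/-- A finite-support lottery on `X`. -/
structure Lottery (X : Type*) where
  val : X →₀ ℝ
  nonneg : ∀ x, 0 ≤ val x
  total : val.sum (fun _ p => p) = 1

namespace Lottery

variable {X : Type*}

/-- The point-mass lottery at `x`. -/
def delta (x : X) : Lottery X where
  val := Finsupp.single x 1
  nonneg := fun y => by
    classical
    rw [Finsupp.single_apply]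
    split <;> norm_num
  total := by
    rw [Finsupp.sum_single_index rfl]

/-- The mixture `α • f + (1 - α) • g`. -/
def mix (α : ℝ) (h1 : 0 ≤ α) (h2 : α ≤ 1) (f g : Lottery X) : Lottery X where
  val := α • f.val + (1 - α) • g.val
  nonneg := fun x => by
    have hf := f.nonneg x
    have hg := g.nonneg x
    simp only [Finsupp.coe_add, Finsupp.coe_smul, Pi.add_apply, Pi.smul_apply, smul_eq_mul]
    nlinarith
  total := by
    rw [Finsupp.sum_add_index' (fun _ => rfl) (fun _ _ _ => rfl)]
    rw [Finsupp.sum_smul_index (fun _ => rfl), Finsupp.sum_smul_index (fun _ => rfl)]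
    rw [← Finsupp.mul_sum, ← Finsupp.mul_sum, f.total, g.total]
    ring

/-- The uniform lottery on `a` and `b`, written `a/b` in the paper. -/
def unif (a b : X) : Lottery X := mix (1/2) (by norm_num) (by norm_num) (delta a) (delta b)

/-- Strict preference. -/
def SPref (R : Lottery X → Lottery X → Prop) (f g : Lottery X) : Prop := R f g ∧ ¬ R g f

/-- Indifference. -/
def Indiff (R : Lottery X → Lottery X → Prop) (f g : Lottery X) : Prop := R f g ∧ R g f

/-- Incomparability. -/
def Incomp (R : Lottery X → Lottery X → Prop) (f g : Lottery X) : Prop := ¬ R f g ∧ ¬ R g f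

/-- Negative Dominance. -/
def NegDominance (R : Lottery X → Lottery X → Prop) : Prop :=
  ∀ f g : Lottery X, SPref R f g →
    ∃ o ∈ f.val.support, ∃ o' ∈ g.val.support, SPref R (delta o) (delta o')

/-- Independence. -/
def Independence (R : Lottery X → Lottery X → Prop) : Prop :=
  ∀ f g h : Lottery X, ∀ α : ℝ, ∀ (h1 : 0 < α) (h2 : α < 1),
    (R f g ↔ R (mix α h1.le h2.le f h) (mix α h1.le h2.le g h))

/-- The coordinatewise expectation of a lottery on `ℝ²`. -/
def expLot (f : Lottery (ℝ × ℝ)) : ℝ × ℝ :=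
  (f.val.sum fun o p => p * o.1, f.val.sum fun o p => p * o.2)

/-- Pareto. -/
def Pareto (R : Lottery (ℝ × ℝ) → Lottery (ℝ × ℝ) → Prop) : Prop :=
  ∀ x y x' y' : ℝ, x' ≤ x → y' ≤ y → R (delta (x, y)) (delta (x', y'))

/-- Converse Pareto. -/
def ConvPareto (R : Lottery (ℝ × ℝ) → Lottery (ℝ × ℝ) → Prop) : Prop :=
  ∀ x y x' y' : ℝ, R (delta (x, y)) (delta (x', y')) → x' ≤ x ∧ y' ≤ y

/-- Two outcomes are unidimensional with each other if they differ in at most one coordinate. -/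
def UniWith {A B : Type*} (o o' : A × B) : Prop := o.1 = o'.1 ∨ o.2 = o'.2

/-- A lottery is unidimensional if any two outcomes in its support are unidimensional
with each other. -/
def Unidim {A B : Type*} (f : Lottery (A × B)) : Prop :=
  ∀ o ∈ f.val.support, ∀ o' ∈ f.val.support, UniWith o o'

/-- Expectationalism. -/
def Expectationalism (R : Lottery (ℝ × ℝ) → Lottery (ℝ × ℝ) → Prop) : Prop :=
  ∀ f, Indiff R f (delta (expLot f))

/-- Unidimensional Expectations. -/
def UnidimExp (R : Lottery (ℝ × ℝ) → Lottery (ℝ × ℝ) → Prop) : Prop :=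
  ∀ f, Unidim f → Indiff R f (delta (expLot f))

end Lottery

open Lottery

/-- A mixture-preserving real-valued function on lotteries. -/
def MixPres {X : Type*} (u : Lottery X → ℝ) : Prop :=
  ∀ f g : Lottery X, ∀ α : ℝ, ∀ (h1 : 0 ≤ α) (h2 : α ≤ 1),
    u (mix α h1 h2 f g) = α * u f + (1 - α) * u g

/-- Sets of Utilities. -/
def SetsOfUtilities (R : Lottery (ℝ × ℝ) → Lottery (ℝ × ℝ) → Prop) : Prop :=
  ∃ U : Set (Lottery (ℝ × ℝ) → ℝ), U.Nonempty ∧ (∀ u ∈ U, MixPres u) ∧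
    ∀ f g : Lottery (ℝ × ℝ), (R f g ↔ ∀ u ∈ U, u g ≤ u f)

/-- A preorder on Δ satisfying Pareto, Converse Pareto, Sets of
Utilities, and Unidimensional Expectations satisfies Expectationalism. -/
lemma Lottery.ext' {X : Type*} {f g : Lottery X} (h : f.val = g.val) : f = g := by
  cases f; cases g; cases h; rfl

lemma delta_val {X : Type*} (o : X) : (Lottery.delta o).val = Finsupp.single o 1 := rfl

lemma expLot_delta (o : ℝ × ℝ) : expLot (delta o) = o := by
  unfold expLot
  rw [delta_val, Finsupp.sum_single_index (by ring), Finsupp.sum_single_index (by ring)]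
  simp

lemma expLot_mix (α : ℝ) (h1 : 0 ≤ α) (h2 : α ≤ 1) (f g : Lottery (ℝ × ℝ)) :
    expLot (mix α h1 h2 f g) =
      (α * (expLot f).1 + (1 - α) * (expLot g).1,
       α * (expLot f).2 + (1 - α) * (expLot g).2) := by
  unfold expLot mix
  simp only
  rw [Finsupp.sum_add_index' (fun _ => by ring) (fun _ _ _ => by ring),
      Finsupp.sum_add_index' (fun _ => by ring) (fun _ _ _ => by ring),
      Finsupp.sum_smul_index (fun _ => by ring), Finsupp.sum_smul_index (fun _ => by ring),
      Finsupp.sum_smul_index (fun _ => by ring), Finsupp.sum_smul_index (fun _ => by ring)]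
  congr 1
  all_goals
    rw [Finsupp.mul_sum, Finsupp.mul_sum]
    congr 1
    · exact Finsupp.sum_congr (fun x _ => by ring)
    · exact Finsupp.sum_congr (fun x _ => by ring)

lemma unidim_mix_delta {o o' : ℝ × ℝ} (h : UniWith o o') (α : ℝ) (h1 : 0 ≤ α) (h2 : α ≤ 1) :
    Unidim (mix α h1 h2 (delta o) (delta o')) := by
  classical
  have hsub : (mix α h1 h2 (delta o) (delta o')).val.support ⊆ {o, o'} := by
    refine (Finsupp.support_add).trans ?_
    apply Finset.union_subset
    · exact (Finsupp.support_smul).trans (by rw [delta_val]; exact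
        (Finsupp.support_single_subset).trans (by simp))
    · exact (Finsupp.support_smul).trans (by rw [delta_val]; exact
        (Finsupp.support_single_subset).trans (by simp))
  intro a ha b hb
  have ha' := hsub ha
  have hb' := hsub hb
  simp only [Finset.mem_insert, Finset.mem_singleton] at ha' hb'
  rcases ha' with rfl | rfl <;> rcases hb' with rfl | rfl
  · exact Or.inl rfl
  · exact h
  · exact h.imp Eq.symm Eq.symm
  · exact Or.inl rfl

-- convex-combination-affine implies affine
lemma convex_affine {g : ℝ → ℝ}
    (h : ∀ x z α : ℝ, 0 ≤ α → α ≤ 1 → g (α * x + (1 - α) * z) = α * g x + (1 - α) * g z)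
    (t : ℝ) : g t = g 0 + t * (g 1 - g 0) := by
  rcases le_or_gt t 0 with ht | ht
  · rcases eq_or_lt_of_le ht with rfl | ht
    · ring
    · have h1t : (0:ℝ) < 1 - t := by linarith
      have key := h t 1 (1 / (1 - t)) (by positivity) (by rw [div_le_one h1t]; linarith)
      have harg : (1 / (1 - t)) * t + (1 - 1 / (1 - t)) * 1 = 0 := by field_simp; ring
      rw [harg] at key
      have := congrArg (fun s => (1 - t) * s) key
      field_simp at this
      linarith [this]
  · rcases le_or_gt t 1 with ht1 | ht1
    · have key := h 1 0 t ht.le ht1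
      rw [show t * 1 + (1 - t) * 0 = t by ring] at key
      rw [key]; ring
    · have key := h t 0 (1 / t) (by positivity) (by rw [div_le_one (by linarith)]; linarith)
      rw [show (1 / t) * t + (1 - 1 / t) * 0 = 1 by field_simp; ring] at key
      have := congrArg (fun s => t * s) key
      field_simp at this
      linarith [this]

-- mixture-preserving expansion
lemma mixpres_sum {X : Type*} {u : Lottery X → ℝ} (hu : MixPres u) (f : Lottery X) :
    u f = ∑ o ∈ f.val.support, f.val o * u (delta o) := by
  classical
  obtain ⟨n, hn⟩ : ∃ n, f.val.support.card = n := ⟨_, rfl⟩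
  induction n using Nat.strong_induction_on generalizing f with
  | _ n ih =>
    have hne : f.val.support.Nonempty := by
      rw [Finset.nonempty_iff_ne_empty]
      intro hemp
      have := f.total
      rw [Finsupp.sum, hemp, Finset.sum_empty] at this
      norm_num at this
    obtain ⟨o, ho⟩ := hne
    set p := f.val o with hp
    have hp0 : 0 < p := lt_of_le_of_ne (f.nonneg o) (by
      symm; exact Finsupp.mem_support_iff.mp ho)
    have hp1 : p ≤ 1 := by
      have := f.total
      rw [Finsupp.sum] at this
      rw [← this]
      exact Finset.single_le_sum (fun i _ => f.nonneg i) ho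
    rcases eq_or_lt_of_le hp1 with hpe | hpl
    · -- p = 1, f = delta o
      have hzero : ∀ x, x ≠ o → f.val x = 0 := by
        intro x hx
        by_contra hfx
        have hx0 : 0 < f.val x := lt_of_le_of_ne (f.nonneg x) (Ne.symm hfx)
        have hxs : x ∈ f.val.support := Finsupp.mem_support_iff.mpr hfx
        have := f.total
        rw [Finsupp.sum, ← Finset.add_sum_erase _ _ ho] at this
        have hxe : x ∈ f.val.support.erase o := Finset.mem_erase.mpr ⟨hx, hxs⟩
        have hsum : f.val x ≤ ∑ i ∈ f.val.support.erase o, f.val i :=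
          Finset.single_le_sum (fun i _ => f.nonneg i) hxe
        rw [← hpe] at this
        linarith
      have hfe : f = delta o := by
        apply Lottery.ext'
        ext x
        rw [delta_val, Finsupp.single_apply]
        split
        · next hh => rw [← hh]; exact hp.symm.trans hpe
        · next hh => exact hzero x (Ne.symm hh)
      rw [hfe, delta_val, Finsupp.support_single_ne_zero o one_ne_zero,
        Finset.sum_singleton, Finsupp.single_apply, if_pos rfl]
      ring
    · -- 0 < p < 1; split off delta o
      have h1p : 0 < 1 - p := by linarith
      set g : Lottery X := ⟨(1 - p)⁻¹ • (f.val.erase o),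
        fun x => by
          simp only [Finsupp.coe_smul, Pi.smul_apply, smul_eq_mul]
          exact mul_nonneg (by positivity) (by
            rw [Finsupp.erase_apply]; split
            · exact le_refl 0
            · exact f.nonneg x),
        by
          rw [Finsupp.sum_smul_index (fun _ => rfl), ← Finsupp.mul_sum]
          have herase : (f.val.erase o).sum (fun _ q => q) = 1 - p := by
            rw [Finsupp.sum, Finsupp.support_erase]
            have : ∑ x ∈ f.val.support.erase o, (f.val.erase o) x
                = ∑ x ∈ f.val.support.erase o, f.val x := by
              apply Finset.sum_congr rfl
              intro x hx
              rw [Finsupp.erase_apply, if_neg (Finset.mem_erase.mp hx).1]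
            rw [this]
            have := f.total
            rw [Finsupp.sum, ← Finset.add_sum_erase _ _ ho] at this
            linarith
          rw [herase]
          field_simp⟩ with hg
      have hfval : f.val = p • (delta o).val + (1 - p) • g.val := by
        rw [hg, delta_val]
        ext x
        simp only [Finsupp.coe_add, Finsupp.coe_smul, Pi.add_apply, Pi.smul_apply,
          smul_eq_mul]
        rw [Finsupp.single_apply, Finsupp.erase_apply]
        by_cases hh : x = o
        · subst hh
          rw [if_pos rfl, if_pos rfl, ← hp]
          ring
        · rw [if_neg (fun h => hh h.symm), if_neg hh]
          field_simp
          ring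
      have hfmix : f = mix p hp0.le hp1 (delta o) g := Lottery.ext' hfval
      have hgsupp : g.val.support = f.val.support.erase o := by
        rw [hg]
        simp only
        rw [Finsupp.support_smul_eq (by positivity), Finsupp.support_erase]
      have hcard : (f.val.support.erase o).card < n := by
        rw [← hn]
        exact Finset.card_erase_lt_of_mem ho
      have hug := ih g.val.support.card (by rw [hgsupp]; exact hcard) g rfl
      have huf : u f = p * u (delta o) + (1 - p) * u g := by
        rw [hfmix]; exact hu _ _ _ _ _
      rw [huf, hug, hgsupp]
      rw [← Finset.add_sum_erase _ _ ho, Finset.mul_sum]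
      congr 1
      apply Finset.sum_congr rfl
      intro x hx
      have : g.val x = (1 - p)⁻¹ * f.val x := by
        rw [hg]
        simp only [Finsupp.coe_smul, Pi.smul_apply, smul_eq_mul]
        rw [Finsupp.erase_apply, if_neg (Finset.mem_erase.mp hx).1]
      rw [this]
      field_simp

theorem statement13 (R : Lottery (ℝ × ℝ) → Lottery (ℝ × ℝ) → Prop)
    (hrefl : Reflexive R) (htrans : Transitive R)
    (hP : Pareto R) (hCP : ConvPareto R) (hS : SetsOfUtilities R) (hUE : UnidimExp R) :
    Expectationalism R := by
  classical
  obtain ⟨U, hUne, hUmp, hiff⟩ := hS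
  intro f
  have goal_u : ∀ u ∈ U, u f = u (delta (expLot f)) := by
    intro u hu
    have hmp := hUmp u hu
    set v : ℝ × ℝ → ℝ := fun o => u (delta o) with hv
    have key : ∀ o o' : ℝ × ℝ, UniWith o o' → ∀ α : ℝ, ∀ (h1 : 0 ≤ α) (h2 : α ≤ 1),
        v (α * o.1 + (1 - α) * o'.1, α * o.2 + (1 - α) * o'.2)
          = α * v o + (1 - α) * v o' := by
      intro o o' huni α h1 h2
      have hum := unidim_mix_delta huni α h1 h2
      have hind := hUE _ hum
      have ha := (hiff _ _).mp hind.1 u hu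
      have hb := (hiff _ _).mp hind.2 u hu
      have heq : u (mix α h1 h2 (delta o) (delta o'))
          = u (delta (expLot (mix α h1 h2 (delta o) (delta o')))) := le_antisymm hb ha
      rw [expLot_mix, expLot_delta, expLot_delta] at heq
      show u (delta _) = α * u (delta o) + (1 - α) * u (delta o')
      rw [← heq, hmp _ _ _ h1 h2]
    have hx : ∀ y x x' α : ℝ, 0 ≤ α → α ≤ 1 →
        v (α * x + (1 - α) * x', y) = α * v (x, y) + (1 - α) * v (x', y) := by
      intro y x x' α h1 h2
      have h := key (x, y) (x', y) (Or.inr rfl) α h1 h2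
      have hyy : α * ((x : ℝ), y).2 + (1 - α) * ((x' : ℝ), y).2 = y := by
        show α * y + (1 - α) * y = y; ring
      rw [hyy] at h
      exact h
    have hy : ∀ x y y' α : ℝ, 0 ≤ α → α ≤ 1 →
        v (x, α * y + (1 - α) * y') = α * v (x, y) + (1 - α) * v (x, y') := by
      intro x y y' α h1 h2
      have h := key (x, y) (x, y') (Or.inl rfl) α h1 h2
      have hxx : α * ((x : ℝ), y).1 + (1 - α) * ((x : ℝ), y').1 = x := by
        show α * x + (1 - α) * x = x; ring
      rw [hxx] at h
      exact h
    have haffx : ∀ y x : ℝ, v (x, y) = v (0, y) + x * (v (1, y) - v (0, y)) := by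
      intro y x
      exact convex_affine (g := fun s => v (s, y))
        (fun a b α h1 h2 => hx y a b α h1 h2) x
    have haffy : ∀ x y : ℝ, v (x, y) = v (x, 0) + y * (v (x, 1) - v (x, 0)) := by
      intro x y
      exact convex_affine (g := fun s => v (x, s))
        (fun a b α h1 h2 => hy x a b α h1 h2) y
    have hform : ∀ x y : ℝ, v (x, y) = v (0, 0) + x * (v (1, 0) - v (0, 0))
        + y * (v (0, 1) - v (0, 0))
        + x * y * (v (1, 1) - v (1, 0) - v (0, 1) + v (0, 0)) := by
      intro x y
      rw [haffy x y, haffx 0 x, haffx 1 x]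
      ring
    have hmono : ∀ x : ℝ, v (x, 0) ≤ v (x, 1) := by
      intro x
      exact (hiff _ _).mp (hP x 1 x 0 le_rfl zero_le_one) u hu
    have hc : ∀ x : ℝ, 0 ≤ (v (0, 1) - v (0, 0))
        + x * (v (1, 1) - v (1, 0) - v (0, 1) + v (0, 0)) := by
      intro x
      have h := hmono x
      rw [hform x 0, hform x 1] at h
      linarith
    have hslope : ∀ c d : ℝ, (∀ x : ℝ, 0 ≤ c + x * d) → d = 0 := by
      intro c d h
      by_contra hd
      have h2 := h ((-1 - c) / d)
      rw [div_mul_cancel₀ _ hd] at h2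
      linarith
    have hd := hslope _ _ hc
    have hvform : ∀ o : ℝ × ℝ, v o = v (0, 0) + o.1 * (v (1, 0) - v (0, 0))
        + o.2 * (v (0, 1) - v (0, 0)) := by
      rintro ⟨x, y⟩
      have h := hform x y
      rw [hd, mul_zero, add_zero] at h
      exact h
    have hT : ∑ o ∈ f.val.support, f.val o = 1 := by
      have h := f.total; rwa [Finsupp.sum] at h
    have e1 : (expLot f).1 = ∑ o ∈ f.val.support, f.val o * o.1 := rfl
    have e2 : (expLot f).2 = ∑ o ∈ f.val.support, f.val o * o.2 := rfl
    rw [mixpres_sum hmp f]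
    show ∑ o ∈ f.val.support, f.val o * v o = v (expLot f)
    calc ∑ o ∈ f.val.support, f.val o * v o
        = ∑ o ∈ f.val.support, (f.val o * v (0, 0)
            + (f.val o * o.1) * (v (1, 0) - v (0, 0))
            + (f.val o * o.2) * (v (0, 1) - v (0, 0))) := by
          refine Finset.sum_congr rfl fun o _ => ?_
          rw [hvform o]; ring
      _ = (∑ o ∈ f.val.support, f.val o) * v (0, 0)
            + (∑ o ∈ f.val.support, f.val o * o.1) * (v (1, 0) - v (0, 0))
            + (∑ o ∈ f.val.support, f.val o * o.2) * (v (0, 1) - v (0, 0)) := by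
          rw [Finset.sum_add_distrib, Finset.sum_add_distrib,
            ← Finset.sum_mul, ← Finset.sum_mul, ← Finset.sum_mul]
      _ = v (expLot f) := by
          rw [hvform (expLot f), hT, e1, e2]; ring
  constructor
  · exact (hiff _ _).mpr fun u hu => (goal_u u hu).ge
  · exact (hiff _ _).mpr fun u hu => (goal_u u hu).le
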